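/- Along the Veselova vector field Z(x,M) = (x × ω, M × ω + λx), with ω = ÂM and λ = (ÂM × M, Âx)/(Âx,x), the following hold at every point of V: the functions Ĥ_3 = (x,x) and Ĥ_4 = (x, ÂM) have vanishing derivative along Z; on the subset where (x,x) ≠ 0, the function Ĥ_2 = (M,M) − (x,M)²/(x,x) has vanishing derivative along Z; and at every point where additionally (x, ÂM) = 0, the function Ĥ_1 = (M, ÂM) has vanishing derivative along Z. -/

import Mathlib

open scoped BigOperators

noncomputable section

abbrev Pt3 : Type := (Fin 3 → ℝ) × (Fin 3 → ℝ)

/-- Euclidean scalar product on ℝ³ -/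
def dot (a b : Fin 3 → ℝ) : ℝ := ∑ i, a i * b i

/-- totally antisymmetric Levi-Civita symbol on `Fin 3` -/
def eps (i j k : Fin 3) : ℝ :=
  ((((i : ℕ) : ℝ) - ((j : ℕ) : ℝ)) * (((j : ℕ) : ℝ) - ((k : ℕ) : ℝ))
    * (((k : ℕ) : ℝ) - ((i : ℕ) : ℝ))) / 2

/-- vector cross product on ℝ³ -/
def cross (a b : Fin 3 → ℝ) : Fin 3 → ℝ := fun i => ∑ j, ∑ k, eps i j k * a j * b k

/-- partial derivative in the coordinate `x i` -/
def dx (f : Pt3 → ℝ) (i : Fin 3) (z : Pt3) : ℝ := fderiv ℝ f z (Pi.single i 1, 0)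

/-- partial derivative in the coordinate `M i` (second group of coordinates) -/
def dM (f : Pt3 → ℝ) (i : Fin 3) (z : Pt3) : ℝ := fderiv ℝ f z (0, Pi.single i 1)

/-- partial derivative of a function of `x` only -/
def dxg (g : (Fin 3 → ℝ) → ℝ) (i : Fin 3) (x : Fin 3 → ℝ) : ℝ := fderiv ℝ g x (Pi.single i 1)

/-- bracket associated with a skew-symmetric structure matrix π with
`π_{x_i x_j} = 0`, `π_{M_i x_j} = Axm i j`, `π_{M_i M_j} = Bmm i j`. -/
def piBracket (Axm Bmm : Fin 3 → Fin 3 → Pt3 → ℝ) (f h : Pt3 → ℝ) (z : Pt3) : ℝ :=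
  ∑ i, ∑ j,
    (dM f i z * Axm i j z * dx h j z - dx f j z * Axm i j z * dM h i z
      + dM f i z * Bmm i j z * dM h j z)

/-- angular velocity `ω = Â M` with `Â = diag â` -/
def omV (ah : Fin 3 → ℝ) (z : Pt3) : Fin 3 → ℝ := fun i => ah i * z.2 i

/-- Lagrange multiplier `λ = (Â M × M, Â x)/(Â x, x)` -/
def lamV (ah : Fin 3 → ℝ) (z : Pt3) : ℝ :=
  dot (cross (omV ah z) z.2) (fun i => ah i * z.1 i)
    / dot (fun i => ah i * z.1 i) z.1

/-- the Veselova vector field `Z(x,M) = (x × ω, M × ω + λ x)` -/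
def Zves (ah : Fin 3 → ℝ) (z : Pt3) : Pt3 :=
  (cross z.1 (omV ah z), fun i => cross z.2 (omV ah z) i + lamV ah z * z.1 i)

/-- coordinate projection onto `x i` as a continuous linear map -/
def CX (i : Fin 3) : Pt3 →L[ℝ] ℝ :=
  (ContinuousLinearMap.proj i).comp (ContinuousLinearMap.fst ℝ _ _)

/-- coordinate projection onto `M i` as a continuous linear map -/
def CM (i : Fin 3) : Pt3 →L[ℝ] ℝ :=
  (ContinuousLinearMap.proj i).comp (ContinuousLinearMap.snd ℝ _ _)

lemma hasF_xx (z : Pt3) : HasFDerivAt (fun w : Pt3 => dot w.1 w.1)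
    (∑ i : Fin 3, (z.1 i • CX i + z.1 i • CX i)) z := by
  have := HasFDerivAt.fun_sum (u := Finset.univ)
    (fun i (_ : i ∈ Finset.univ) => ((CX i).hasFDerivAt (x := z)).mul ((CX i).hasFDerivAt (x := z)))
  simpa [dot, CX] using this

lemma hasF_xM (z : Pt3) : HasFDerivAt (fun w : Pt3 => dot w.1 w.2)
    (∑ i : Fin 3, (z.1 i • CM i + z.2 i • CX i)) z := by
  have := HasFDerivAt.fun_sum (u := Finset.univ)
    (fun i (_ : i ∈ Finset.univ) => ((CX i).hasFDerivAt (x := z)).mul ((CM i).hasFDerivAt (x := z)))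
  simpa [dot, CX, CM] using this

lemma hasF_MM (z : Pt3) : HasFDerivAt (fun w : Pt3 => dot w.2 w.2)
    (∑ i : Fin 3, (z.2 i • CM i + z.2 i • CM i)) z := by
  have := HasFDerivAt.fun_sum (u := Finset.univ)
    (fun i (_ : i ∈ Finset.univ) => ((CM i).hasFDerivAt (x := z)).mul ((CM i).hasFDerivAt (x := z)))
  simpa [dot, CM] using this

lemma hasF_xAM (ah : Fin 3 → ℝ) (z : Pt3) :
    HasFDerivAt (fun w : Pt3 => dot w.1 (fun i => ah i * w.2 i))
    (∑ i : Fin 3, (z.1 i • (ah i • CM i) + (ah i * z.2 i) • CX i)) z := by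
  have := HasFDerivAt.fun_sum (u := Finset.univ)
    (fun i (_ : i ∈ Finset.univ) => ((CX i).hasFDerivAt (x := z)).mul
      (((ah i) • (CM i)).hasFDerivAt (x := z)))
  simpa [dot, CX, CM, mul_comm] using this

lemma hasF_MAM (ah : Fin 3 → ℝ) (z : Pt3) :
    HasFDerivAt (fun w : Pt3 => dot w.2 (fun i => ah i * w.2 i))
    (∑ i : Fin 3, (z.2 i • (ah i • CM i) + (ah i * z.2 i) • CM i)) z := by
  have := HasFDerivAt.fun_sum (u := Finset.univ)
    (fun i (_ : i ∈ Finset.univ) => ((CM i).hasFDerivAt (x := z)).mul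
      (((ah i) • (CM i)).hasFDerivAt (x := z)))
  simpa [dot, CM, mul_comm] using this

set_option maxHeartbeats 1000000 in
/-- first integrals of the Veselova vector field. -/
theorem veselova_integrals (ah : Fin 3 → ℝ) :
    ∀ z : Pt3, dot (fun i => ah i * z.1 i) z.1 ≠ 0 →
      fderiv ℝ (fun w => dot w.1 w.1) z (Zves ah z) = 0
      ∧ fderiv ℝ (fun w => dot w.1 (fun i => ah i * w.2 i)) z (Zves ah z) = 0
      ∧ (dot z.1 z.1 ≠ 0 →
          fderiv ℝ (fun w => dot w.2 w.2 - (dot w.1 w.2) ^ 2 / dot w.1 w.1) z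
            (Zves ah z) = 0)
      ∧ (dot z.1 (fun i => ah i * z.2 i) = 0 →
          fderiv ℝ (fun w => dot w.2 (fun i => ah i * w.2 i)) z (Zves ah z) = 0) := by
  intro z hV
  have hl : lamV ah z * dot (fun i => ah i * z.1 i) z.1
      = dot (cross (omV ah z) z.2) (fun i => ah i * z.1 i) := by
    rw [lamV, div_mul_cancel₀ _ hV]
  set l := lamV ah z with hldef
  simp only [dot, cross, omV, eps, Fin.sum_univ_three] at hl
  norm_num at hl
  refine ⟨?_, ?_, ?_, ?_⟩
  · rw [(hasF_xx z).fderiv]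
    simp only [ContinuousLinearMap.sum_apply, ContinuousLinearMap.add_apply,
      ContinuousLinearMap.smul_apply, smul_eq_mul, CX, CM, ContinuousLinearMap.coe_comp',
      Function.comp_apply, ContinuousLinearMap.proj_apply, ContinuousLinearMap.coe_fst',
      ContinuousLinearMap.coe_snd', Fin.sum_univ_three, Zves]
    simp only [dot, cross, omV, eps, Fin.sum_univ_three]
    norm_num
    ring
  · rw [(hasF_xAM ah z).fderiv]
    simp only [ContinuousLinearMap.sum_apply, ContinuousLinearMap.add_apply,
      ContinuousLinearMap.smul_apply, smul_eq_mul, CX, CM, ContinuousLinearMap.coe_comp',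
      Function.comp_apply, ContinuousLinearMap.proj_apply, ContinuousLinearMap.coe_fst',
      ContinuousLinearMap.coe_snd', Fin.sum_univ_three, Zves]
    simp only [dot, cross, omV, eps, Fin.sum_univ_three]
    norm_num
    linear_combination hl
  · intro h33
    have h33' := h33
    simp only [dot, Fin.sum_univ_three] at h33'
    have hfun : (fun w : Pt3 => dot w.2 w.2 - (dot w.1 w.2) ^ 2 / dot w.1 w.1)
        = (fun w : Pt3 => dot w.2 w.2 - dot w.1 w.2 * dot w.1 w.2 * (dot w.1 w.1)⁻¹) := by
      funext w; ring
    rw [hfun]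
    have hinv := (hasDerivAt_inv h33).comp_hasFDerivAt z (hasF_xx z)
    have h := (hasF_MM z).fun_sub (((hasF_xM z).fun_mul (hasF_xM z)).fun_mul hinv)
    simp only [Function.comp_def] at h
    rw [h.fderiv]
    simp only [ContinuousLinearMap.sub_apply, ContinuousLinearMap.sum_apply,
      ContinuousLinearMap.add_apply, ContinuousLinearMap.smul_apply, smul_eq_mul,
      CX, CM, ContinuousLinearMap.coe_comp', Function.comp_apply,
      ContinuousLinearMap.proj_apply, ContinuousLinearMap.coe_fst',
      ContinuousLinearMap.coe_snd', Fin.sum_univ_three, Zves]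
    simp only [dot, cross, omV, eps, Fin.sum_univ_three]
    norm_num
    have hsq : z.1 0 ^ 2 * z.1 1 ^ 2 * 2 + z.1 0 ^ 2 * z.1 2 ^ 2 * 2 + z.1 0 ^ 4 +
        z.1 1 ^ 2 * z.1 2 ^ 2 * 2 + z.1 1 ^ 4 + z.1 2 ^ 4 ≠ 0 := by
      have := pow_ne_zero 2 h33'
      convert this using 1
      ring
    field_simp
    linear_combination (-(2 * lamV ah z * (z.2 0 * z.1 0 + z.2 1 * z.1 1 + z.2 2 * z.1 2)))
      * (mul_inv_cancel₀ hsq)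
  · intro h0
    have h0' := h0
    simp only [dot, Fin.sum_univ_three] at h0'
    rw [(hasF_MAM ah z).fderiv]
    simp only [ContinuousLinearMap.sum_apply, ContinuousLinearMap.add_apply,
      ContinuousLinearMap.smul_apply, smul_eq_mul, CX, CM, ContinuousLinearMap.coe_comp',
      Function.comp_apply, ContinuousLinearMap.proj_apply, ContinuousLinearMap.coe_fst',
      ContinuousLinearMap.coe_snd', Fin.sum_univ_three, Zves]
    simp only [dot, cross, omV, eps, Fin.sum_univ_three]
    norm_num
    linear_combination (2 * l) * h0'
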